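/- Theorem 2 (maximal inequality for martingales over σ-finite measure). Let (X, Σ, μ) be a σ-finite measure space, let (𝔽_n)_{n≥1} be a filtration of sub-σ-algebras of Σ such that μ restricted to each 𝔽_n is σ-finite, and let (S_n)_{n≥1} be a martingale with respect to (𝔽_n) (each S_n integrable, 𝔽_n-measurable, with conditional expectation of S_{n+1} given 𝔽_n equal to S_n a.e.), such that S_n ∈ L^p(μ) for all p ∈ (a,b), where 1 < a < b ≤ ∞ and ψ ∈ Ψ(a,b). Let γ > 0 and L : {1,2,…} → (0,∞) satisfy C₂ := sup_{n≥1} L(2n)/L(n) < ∞; set σ(n) = n^γ L(n) and assume n ↦ σ(n) is nondecreasing. Assume K := sup_{n≥1} sup_{p∈(a,b)} ‖S_n‖_{L^p(μ)}/(ψ(p)·σ(n)) < ∞. Let v : {1,2,…} → (0,∞) be nondecreasing with V := Σ_{k=1}^∞ 1/v(2^{k−1}) < ∞. Then, with ψ₁(p) = p·ψ(p)/(p − 1) for p ∈ (a,b), the maximal function τ = sup_{n≥1} |S_n|/(v(n)·σ(n)) satisfies ‖τ‖_{G(ψ₁)} ≤ 2^γ · C₂ · V · K. -/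

import Mathlib

open MeasureTheory ENNReal Set

noncomputable section

/-- The set of exponents p with a < p and p < b (b may be infinite). -/
def expSet (a : ℝ) (b : ℝ≥0∞) : Set ℝ := {p : ℝ | a < p ∧ ENNReal.ofReal p < b}

/-- The class Ψ(a,b). -/
structure IsPsi (a : ℝ) (b : ℝ≥0∞) (ψ : ℝ → ℝ) : Prop where
  one_le : ∀ p ∈ expSet a b, 1 ≤ ψ p
  bddOnCompacts : ∀ c d : ℝ, c ∈ expSet a b → d ∈ expSet a b → BddAbove (ψ '' Set.Icc c d)
  logConvex : ConvexOn ℝ (expSet a b) fun p => Real.log (ψ p)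

/-- L^p norm (real exponent). -/
def lpNorm {X : Type*} [MeasurableSpace X] (μ : Measure X) (f : X → ℝ) (p : ℝ) : ℝ≥0∞ :=
  (∫⁻ x, ENNReal.ofReal (|f x| ^ p) ∂μ) ^ (1 / p)

/-- Bilateral Grand Lebesgue norm. -/
def glNorm {X : Type*} [MeasurableSpace X] (μ : Measure X) (a : ℝ) (b : ℝ≥0∞) (ψ : ℝ → ℝ)
    (f : X → ℝ) : ℝ≥0∞ :=
  ⨆ p ∈ expSet a b, lpNorm μ f p / ENNReal.ofReal (ψ p)

/-- L^p norm for extended-real-valued functions. -/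
def lpNormE {X : Type*} [MeasurableSpace X] (μ : Measure X) (g : X → EReal) (p : ℝ) : ℝ≥0∞ :=
  (∫⁻ x, (g x).abs ^ p ∂μ) ^ (1 / p)

/-- Bilateral Grand Lebesgue norm for extended-real-valued functions. -/
def glNormE {X : Type*} [MeasurableSpace X] (μ : Measure X) (a : ℝ) (b : ℝ≥0∞) (ψ : ℝ → ℝ)
    (g : X → EReal) : ℝ≥0∞ :=
  ⨆ p ∈ expSet a b, lpNormE μ g p / ENNReal.ofReal (ψ p)

/-- L^p norm for `ℝ≥0∞`-valued functions. -/
def lpNormNN {X : Type*} [MeasurableSpace X] (μ : Measure X) (g : X → ℝ≥0∞) (p : ℝ) : ℝ≥0∞ :=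
  (∫⁻ x, g x ^ p ∂μ) ^ (1 / p)

end

noncomputable section MartAux

variable {X : Type*}

/-- running maximum of |S n| -/
def Mx (S : ℕ → X → ℝ) : ℕ → X → ℝ
  | 0 => fun x => |S 0 x|
  | (N+1) => fun x => max (Mx S N x) |S (N+1) x|

theorem Mx_nonneg (S : ℕ → X → ℝ) (N : ℕ) (x : X) : 0 ≤ Mx S N x := by
  induction N with
  | zero => exact abs_nonneg _
  | succ N ih => exact le_trans ih (le_max_left _ _)

theorem abs_le_Mx (S : ℕ → X → ℝ) {n N : ℕ} (h : n ≤ N) (x : X) : |S n x| ≤ Mx S N x := by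
  induction N with
  | zero => simp_all [Mx]
  | succ N ih =>
    rcases Nat.lt_or_ge n (N+1) with h'|h'
    · exact le_trans (ih (Nat.lt_succ_iff.mp h')) (le_max_left _ _)
    · have : n = N + 1 := le_antisymm h h'
      subst this; exact le_max_right _ _

theorem Mx_eq_abs (S : ℕ → X → ℝ) (N : ℕ) (x : X) : ∃ n ≤ N, Mx S N x = |S n x| := by
  induction N with
  | zero => exact ⟨0, le_rfl, rfl⟩
  | succ N ih =>
    obtain ⟨n, hn, hmx⟩ := ih
    rcases max_cases (Mx S N x) |S (N+1) x| with ⟨h1, _⟩|⟨h1, _⟩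
    · exact ⟨n, hn.trans (Nat.le_succ _), by show max _ _ = _; rw [h1, hmx]⟩
    · exact ⟨N+1, le_rfl, by show max _ _ = _; rw [h1]⟩

theorem le_Mx_iff (S : ℕ → X → ℝ) (N : ℕ) (x : X) {ε : ℝ} :
    ε ≤ Mx S N x ↔ ∃ n ≤ N, ε ≤ |S n x| := by
  constructor
  · intro h
    obtain ⟨n, hn, hmx⟩ := Mx_eq_abs S N x
    exact ⟨n, hn, hmx ▸ h⟩
  · rintro ⟨n, hn, h⟩
    exact h.trans (abs_le_Mx S hn x)

theorem measurable_Mx [MeasurableSpace X] {S : ℕ → X → ℝ} (hS : ∀ n, Measurable (S n)) (N : ℕ) :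
    Measurable (Mx S N) := by
  induction N with
  | zero => exact (hS 0).abs
  | succ N ih => exact ih.max (hS (N+1)).abs

theorem Mx_mono (S : ℕ → X → ℝ) {N N' : ℕ} (h : N ≤ N') (x : X) : Mx S N x ≤ Mx S N' x := by
  induction N' with
  | zero => simp_all
  | succ N' ih =>
    rcases Nat.lt_or_ge N (N'+1) with h'|h'
    · exact le_trans (ih (Nat.lt_succ_iff.mp h')) (le_max_left _ _)
    · have : N = N' + 1 := le_antisymm h h'
      subst this; exact le_rfl

/-- Minkowski inequality for countable sums of `ℝ≥0∞`-valued functions. -/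
theorem lintegral_Lp_tsum_le [MeasurableSpace X] {μ : Measure X} {f : ℕ → X → ℝ≥0∞}
    (hf : ∀ k, Measurable (f k)) {p : ℝ} (hp : 1 ≤ p) :
    (∫⁻ x, (∑' k, f k x) ^ p ∂μ) ^ (1/p) ≤ ∑' k, (∫⁻ x, f k x ^ p ∂μ) ^ (1/p) := by
  have hp0 : 0 < p := lt_of_lt_of_le one_pos hp
  -- finite-sum version
  have finsum : ∀ s : Finset ℕ,
      (∫⁻ x, (∑ k ∈ s, f k x) ^ p ∂μ) ^ (1/p) ≤ ∑ k ∈ s, (∫⁻ x, f k x ^ p ∂μ) ^ (1/p) := by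
    intro s
    induction s using Finset.cons_induction with
    | empty =>
      simp only [Finset.sum_empty, ENNReal.zero_rpow_of_pos hp0, lintegral_zero,
        ENNReal.zero_rpow_of_pos (show (0:ℝ) < 1/p by positivity), le_refl]
    | cons a s ha ih =>
      simp only [Finset.sum_cons]
      calc (∫⁻ x, (f a x + ∑ k ∈ s, f k x) ^ p ∂μ) ^ (1/p)
          ≤ (∫⁻ x, f a x ^ p ∂μ) ^ (1/p) + (∫⁻ x, (∑ k ∈ s, f k x) ^ p ∂μ) ^ (1/p) := by
            exact ENNReal.lintegral_Lp_add_le (hf a).aemeasurable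
              (Finset.measurable_sum s fun k _ => hf k).aemeasurable hp
        _ ≤ (∫⁻ x, f a x ^ p ∂μ) ^ (1/p) + ∑ k ∈ s, (∫⁻ x, f k x ^ p ∂μ) ^ (1/p) := by
            exact add_le_add le_rfl ih
  -- monotone convergence
  have hmono : Monotone (fun K : ℕ => fun x => (∑ k ∈ Finset.range K, f k x) ^ p) := by
    intro K K' hK x
    exact ENNReal.rpow_le_rpow (Finset.sum_le_sum_of_subset (Finset.range_subset_range.mpr hK)) hp0.le
  have hmeas : ∀ K : ℕ, Measurable (fun x => (∑ k ∈ Finset.range K, f k x) ^ p) := fun K =>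
    (ENNReal.continuous_rpow_const).measurable.comp (Finset.measurable_sum _ fun k _ => hf k)
  have key : ∫⁻ x, (∑' k, f k x) ^ p ∂μ
      = ⨆ K : ℕ, ∫⁻ x, (∑ k ∈ Finset.range K, f k x) ^ p ∂μ := by
    rw [← lintegral_iSup hmeas hmono]
    congr 1
    funext x
    have hm : Monotone fun K : ℕ => ∑ k ∈ Finset.range K, f k x := fun K K' hK =>
      Finset.sum_le_sum_of_subset (Finset.range_subset_range.mpr hK)
    have h1 : Filter.Tendsto (fun K : ℕ => ∑ k ∈ Finset.range K, f k x) Filter.atTop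
        (nhds (∑' k, f k x)) := ENNReal.tendsto_nat_tsum _
    have h2 : Filter.Tendsto (fun K : ℕ => (∑ k ∈ Finset.range K, f k x) ^ p) Filter.atTop
        (nhds ((∑' k, f k x) ^ p)) := (ENNReal.continuous_rpow_const.tendsto _).comp h1
    have h3 : Filter.Tendsto (fun K : ℕ => (∑ k ∈ Finset.range K, f k x) ^ p) Filter.atTop
        (nhds (⨆ K : ℕ, (∑ k ∈ Finset.range K, f k x) ^ p)) :=
      tendsto_atTop_iSup (fun K K' hK => ENNReal.rpow_le_rpow (hm hK) hp0.le)
    exact (tendsto_nhds_unique h2 h3)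
  rw [key]
  -- each partial integral is bounded
  have hbd : ∀ K : ℕ, ∫⁻ x, (∑ k ∈ Finset.range K, f k x) ^ p ∂μ
      ≤ (∑' k, (∫⁻ x, f k x ^ p ∂μ) ^ (1/p)) ^ p := by
    intro K
    have h1 := finsum (Finset.range K)
    have h2 : (∑ k ∈ Finset.range K, (∫⁻ x, f k x ^ p ∂μ) ^ (1/p))
        ≤ ∑' k, (∫⁻ x, f k x ^ p ∂μ) ^ (1/p) := ENNReal.sum_le_tsum _
    have h3 := ENNReal.rpow_le_rpow (h1.trans h2) hp0.le
    rwa [← ENNReal.rpow_mul, one_div_mul_cancel hp0.ne', ENNReal.rpow_one] at h3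
  have h4 : (⨆ K : ℕ, ∫⁻ x, (∑ k ∈ Finset.range K, f k x) ^ p ∂μ)
      ≤ (∑' k, (∫⁻ x, f k x ^ p ∂μ) ^ (1/p)) ^ p := iSup_le hbd
  have h5 := ENNReal.rpow_le_rpow h4 (by positivity : (0:ℝ) ≤ 1/p)
  rwa [← ENNReal.rpow_mul, mul_one_div_cancel hp0.ne', ENNReal.rpow_one] at h5

end MartAux

section Weak

variable {X : Type*} {m0 : MeasurableSpace X}

/-- Doob's weak maximal inequality over a general (σ-finite for trim) measure. -/
theorem weak_maximal {μ : Measure X} (ℱ : Filtration ℕ m0)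
    (hσfin : ∀ n, SigmaFinite (μ.trim (ℱ.le n)))
    {S : ℕ → X → ℝ} (hmart : Martingale S ℱ μ) (hint : ∀ n, Integrable (S n) μ)
    (N : ℕ) {ε : ℝ} (hε : 0 < ε) :
    ENNReal.ofReal ε * μ {x | ε ≤ Mx S N x}
      ≤ ∫⁻ x in {x | ε ≤ Mx S N x}, ENNReal.ofReal |S N x| ∂μ := by
  have hSm : ∀ n, Measurable (S n) := fun n =>
    ((hmart.stronglyAdapted n).mono (ℱ.le n)).measurable
  have hSmF : ∀ n m : ℕ, n ≤ m → Measurable[ℱ m] (S n) := fun n m hnm =>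
    ((hmart.stronglyAdapted n).mono (ℱ.mono hnm)).measurable
  -- first-entry decomposition
  set B : ℕ → Set X := fun n =>
    if n ≤ N then ({x | ε ≤ |S n x|} ∩ ⋂ m ∈ Finset.range n, {x | |S m x| < ε}) else ∅ with hB
  have hBmF : ∀ n, MeasurableSet[ℱ n] (B n) := by
    intro n
    letI : MeasurableSpace X := ℱ n
    have h1 : MeasurableSet[ℱ n] {x | ε ≤ |S n x|} := (hSmF n n le_rfl).abs measurableSet_Ici
    have h2 : MeasurableSet[ℱ n] (⋂ m ∈ Finset.range n, {x | |S m x| < ε}) :=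
      MeasurableSet.biInter (Finset.countable_toSet _) fun m hm =>
        (hSmF m n (le_of_lt (Finset.mem_range.mp hm))).abs measurableSet_Iio
    simp only [hB]
    split_ifs
    · exact h1.inter h2
    · exact @MeasurableSet.empty _ (ℱ n)
  have hBm : ∀ n, MeasurableSet (B n) := fun n => ℱ.le n _ (hBmF n)
  have hdisj : Pairwise (Function.onFun Disjoint B) := by
    intro n m hnm
    wlog h : n < m generalizing n m
    · exact (this hnm.symm (by omega)).symm
    simp only [Function.onFun, hB]
    split_ifs with h1 h2
    · rw [Set.disjoint_left]
      rintro x ⟨hx1, _⟩ ⟨_, hx2⟩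
      have h3 : |S n x| < ε := Set.mem_iInter₂.mp hx2 n (Finset.mem_range.mpr h)
      exact absurd (show ε ≤ |S n x| from hx1) (not_le.mpr h3)
    all_goals simp
  have hunion : {x | ε ≤ Mx S N x} = ⋃ n, B n := by
    ext x
    simp only [Set.mem_setOf_eq, Set.mem_iUnion, le_Mx_iff]
    constructor
    · rintro ⟨n, hn, hx⟩
      have hex : ∃ n, ε ≤ |S n x| := ⟨n, hx⟩
      refine ⟨Nat.find hex, ?_⟩
      have h1 : Nat.find hex ≤ n := Nat.find_le hx
      simp only [hB, if_pos (h1.trans hn)]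
      refine ⟨Nat.find_spec hex, Set.mem_iInter₂.mpr fun m hm => ?_⟩
      exact not_le.mp (Nat.find_min hex (Finset.mem_range.mp hm))
    · rintro ⟨n, hx⟩
      simp only [hB] at hx
      split_ifs at hx with h
      · exact ⟨n, h, hx.1⟩
      · exact absurd hx (Set.notMem_empty x)
  -- per-piece inequality
  have hpiece : ∀ n, ENNReal.ofReal ε * μ (B n) ≤ ∫⁻ x in B n, ENNReal.ofReal |S N x| ∂μ := by
    intro n
    by_cases h : n ≤ N
    swap
    · simp [hB, if_neg h]
    have hεS : ∀ x ∈ B n, ε ≤ |S n x| := by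
      intro x hx
      simp only [hB, if_pos h] at hx
      exact hx.1
    haveI := hσfin n
    have step1 : ENNReal.ofReal ε * μ (B n) ≤ ∫⁻ x in B n, ENNReal.ofReal |S n x| ∂μ := by
      rw [← setLIntegral_const (B n) (ENNReal.ofReal ε)]
      exact setLIntegral_mono ((hSm n).abs.ennreal_ofReal) fun x hx =>
        ENNReal.ofReal_le_ofReal (hεS x hx)
    have int_n : Integrable (fun x => |S n x|) (μ.restrict (B n)) :=
      ((hint n).abs).restrict
    have int_N : Integrable (fun x => |S N x|) (μ.restrict (B n)) :=
      ((hint N).abs).restrict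
    have step2 : ∫ x in B n, |S n x| ∂μ ≤ ∫ x in B n, |S N x| ∂μ := by
      have hcond : S n =ᵐ[μ] μ[S N | ℱ n] := (hmart.condExp_ae_eq h).symm
      have hcond' : (fun x => |S n x|) =ᵐ[μ.restrict (B n)] fun x => |(μ[S N | ℱ n]) x| :=
        ae_restrict_of_ae (hcond.fun_comp abs)
      calc ∫ x in B n, |S n x| ∂μ = ∫ x in B n, |(μ[S N | ℱ n]) x| ∂μ :=
            integral_congr_ae hcond'
        _ ≤ ∫ x in B n, |S N x| ∂μ := setIntegral_abs_condExp_le (hBmF n) (S N)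
    have step3 : ∫⁻ x in B n, ENNReal.ofReal |S n x| ∂μ ≤ ∫⁻ x in B n, ENNReal.ofReal |S N x| ∂μ := by
      rw [← ofReal_integral_eq_lintegral_ofReal int_n (Filter.Eventually.of_forall fun x => abs_nonneg _),
        ← ofReal_integral_eq_lintegral_ofReal int_N (Filter.Eventually.of_forall fun x => abs_nonneg _)]
      exact ENNReal.ofReal_le_ofReal step2
    exact step1.trans step3
  calc ENNReal.ofReal ε * μ {x | ε ≤ Mx S N x}
      = ENNReal.ofReal ε * ∑' n, μ (B n) := by rw [hunion, measure_iUnion hdisj hBm]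
    _ = ∑' n, ENNReal.ofReal ε * μ (B n) := ENNReal.tsum_mul_left.symm
    _ ≤ ∑' n, ∫⁻ x in B n, ENNReal.ofReal |S N x| ∂μ := ENNReal.tsum_le_tsum hpiece
    _ = ∫⁻ x in ⋃ n, B n, ENNReal.ofReal |S N x| ∂μ := (lintegral_iUnion hBm hdisj _).symm
    _ = ∫⁻ x in {x | ε ≤ Mx S N x}, ENNReal.ofReal |S N x| ∂μ := by rw [hunion]

end Weak

section Doob

variable {X : Type*} {m0 : MeasurableSpace X}

theorem doob_Lp {μ : Measure X} {S : ℕ → X → ℝ} (hSm : ∀ n, Measurable (S n)) (N : ℕ)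
    (weak : ∀ ε : ℝ, 0 < ε → ENNReal.ofReal ε * μ {x | ε ≤ Mx S N x}
      ≤ ∫⁻ x in {x | ε ≤ Mx S N x}, ENNReal.ofReal |S N x| ∂μ)
    {p : ℝ} (hp : 1 < p)
    (hfin : ∀ n, ∫⁻ x, ENNReal.ofReal |S n x| ^ p ∂μ < ⊤) :
    (∫⁻ x, ENNReal.ofReal (Mx S N x) ^ p ∂μ) ^ (1/p)
      ≤ ENNReal.ofReal (p/(p-1)) * (∫⁻ x, ENNReal.ofReal |S N x| ^ p ∂μ) ^ (1/p) := by
  have hp0 : 0 < p := lt_trans one_pos hp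
  have hp1 : 0 < p - 1 := by linarith
  have hM : Measurable (Mx S N) := measurable_Mx hSm N
  set M := Mx S N with hMdef
  set I := ∫⁻ x, ENNReal.ofReal (M x) ^ p ∂μ with hIdef
  set J := ∫⁻ x, ENNReal.ofReal |S N x| ^ p ∂μ with hJdef
  -- I is finite
  have hIfin : I ≠ ⊤ := by
    have h1 : I ≤ ∫⁻ x, ∑ n ∈ Finset.range (N+1), ENNReal.ofReal |S n x| ^ p ∂μ := by
      refine lintegral_mono fun x => ?_
      obtain ⟨n, hn, he⟩ := Mx_eq_abs S N x
      rw [hMdef, he]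
      exact Finset.single_le_sum (f := fun n => ENNReal.ofReal |S n x| ^ p)
        (fun _ _ => zero_le) (Finset.mem_range.mpr (Nat.lt_succ_of_le hn))
    have h2 : ∫⁻ x, ∑ n ∈ Finset.range (N+1), ENNReal.ofReal |S n x| ^ p ∂μ
        = ∑ n ∈ Finset.range (N+1), ∫⁻ x, ENNReal.ofReal |S n x| ^ p ∂μ :=
      lintegral_finset_sum _ fun n _ =>
        ENNReal.continuous_rpow_const.measurable.comp (hSm n).abs.ennreal_ofReal
    rw [h2] at h1
    exact (h1.trans_lt (ENNReal.sum_lt_top.mpr fun n _ => hfin n)).ne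
  set ν := μ.withDensity (fun x => ENNReal.ofReal |S N x|) with hνdef
  have hMset : ∀ t : ℝ, MeasurableSet {x | t ≤ M x} := fun t =>
    measurableSet_le measurable_const hM
  -- first layercake
  have L1 : I = ENNReal.ofReal p * ∫⁻ t in Ioi 0, μ {x | t ≤ M x} * ENNReal.ofReal (t ^ (p-1)) := by
    have : I = ∫⁻ x, ENNReal.ofReal (M x ^ p) ∂μ := by
      rw [hIdef]
      congr 1; funext x
      exact ENNReal.ofReal_rpow_of_nonneg (Mx_nonneg S N x) hp0.le
    rw [this]
    exact lintegral_rpow_eq_lintegral_meas_le_mul μ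
      (Filter.Eventually.of_forall (Mx_nonneg S N)) hM.aemeasurable hp0
  -- pointwise estimate under the t-integral
  have L2 : ∀ t ∈ Ioi (0:ℝ), μ {x | t ≤ M x} * ENNReal.ofReal (t ^ (p-1))
      ≤ ν {x | t ≤ M x} * ENNReal.ofReal (t ^ (p-2)) := by
    intro t ht
    have ht0 : 0 < t := ht
    have hw := weak t ht0
    have hν : ν {x | t ≤ M x} = ∫⁻ x in {x | t ≤ M x}, ENNReal.ofReal |S N x| ∂μ :=
      withDensity_apply _ (hMset t)
    have hsplit : ENNReal.ofReal (t ^ (p-1)) = ENNReal.ofReal t * ENNReal.ofReal (t ^ (p-2)) := by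
      rw [← ENNReal.ofReal_mul ht0.le]
      congr 1
      rw [show p - 1 = 1 + (p - 2) by ring, Real.rpow_add ht0, Real.rpow_one]
    calc μ {x | t ≤ M x} * ENNReal.ofReal (t ^ (p-1))
        = (ENNReal.ofReal t * μ {x | t ≤ M x}) * ENNReal.ofReal (t ^ (p-2)) := by
          rw [hsplit]; ring
      _ ≤ ν {x | t ≤ M x} * ENNReal.ofReal (t ^ (p-2)) := by
          rw [hν]; exact mul_le_mul_left hw _
  -- second layercake (with respect to ν)
  have hg2meas : Measurable fun t : ℝ => ν {x | t ≤ M x} * ENNReal.ofReal (t ^ (p-2)) := by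
    have ha : Antitone fun t : ℝ => ν {x | t ≤ M x} := fun t t' htt' =>
      measure_mono fun x hx => le_trans htt' hx
    exact ha.measurable.mul ((measurable_id.pow measurable_const : Measurable fun t : ℝ => t ^ (p-2)).ennreal_ofReal)
  have L3 : I ≤ ENNReal.ofReal p * ∫⁻ t in Ioi 0, ν {x | t ≤ M x} * ENNReal.ofReal (t ^ (p-2)) := by
    rw [L1]
    exact mul_le_mul_right (setLIntegral_mono hg2meas L2) _
  have L4 : ∫⁻ x, ENNReal.ofReal (M x ^ (p-1)) ∂ν
      = ENNReal.ofReal (p-1) * ∫⁻ t in Ioi 0, ν {x | t ≤ M x} * ENNReal.ofReal (t ^ (p-2)) := by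
    have := lintegral_rpow_eq_lintegral_meas_le_mul ν
      (Filter.Eventually.of_forall (Mx_nonneg S N)) hM.aemeasurable hp1
    rw [show p - 1 - 1 = p - 2 by ring] at this
    exact this
  have hc0 : ENNReal.ofReal (p-1) ≠ 0 := by simp only [ne_eq, ENNReal.ofReal_eq_zero, not_le]; linarith
  have hctop : ENNReal.ofReal (p-1) ≠ ⊤ := ENNReal.ofReal_ne_top
  have L5 : ∫⁻ t in Ioi 0, ν {x | t ≤ M x} * ENNReal.ofReal (t ^ (p-2))
      = (ENNReal.ofReal (p-1))⁻¹ * ∫⁻ x, ENNReal.ofReal (M x ^ (p-1)) ∂ν := by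
    rw [L4, ← mul_assoc, ENNReal.inv_mul_cancel hc0 hctop, one_mul]
  -- withDensity unfolding
  have hgmeas : Measurable fun x => ENNReal.ofReal (M x ^ (p-1)) :=
    (hM.pow measurable_const).ennreal_ofReal
  have L6 : ∫⁻ x, ENNReal.ofReal (M x ^ (p-1)) ∂ν
      = ∫⁻ x, ENNReal.ofReal |S N x| * ENNReal.ofReal (M x ^ (p-1)) ∂μ := by
    rw [hνdef, lintegral_withDensity_eq_lintegral_mul μ ((hSm N).abs.ennreal_ofReal) hgmeas]
    rfl
  -- Hölder
  have hpq : p.HolderConjugate (p / (p-1)) := Real.HolderConjugate.conjExponent hp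
  have hq1 : 1 / (p / (p-1)) = (p-1)/p := by field_simp
  have holder : ∫⁻ x, ENNReal.ofReal |S N x| * ENNReal.ofReal (M x ^ (p-1)) ∂μ
      ≤ J ^ (1/p) * I ^ ((p-1)/p) := by
    have h := ENNReal.lintegral_mul_le_Lp_mul_Lq μ hpq
      ((hSm N).abs.ennreal_ofReal.aemeasurable) (hgmeas.aemeasurable)
    have heq : ∀ x, ENNReal.ofReal (M x ^ (p-1)) ^ (p/(p-1)) = ENNReal.ofReal (M x) ^ p := by
      intro x
      rw [← ENNReal.ofReal_rpow_of_nonneg (Mx_nonneg S N x) hp1.le, ← ENNReal.rpow_mul]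
      congr 1
      field_simp
    simp only [Pi.mul_apply] at h
    calc ∫⁻ x, ENNReal.ofReal |S N x| * ENNReal.ofReal (M x ^ (p-1)) ∂μ
        ≤ (∫⁻ x, ENNReal.ofReal |S N x| ^ p ∂μ) ^ (1/p)
          * (∫⁻ x, ENNReal.ofReal (M x ^ (p-1)) ^ (p/(p-1)) ∂μ) ^ (1/(p/(p-1))) := h
      _ = J ^ (1/p) * I ^ ((p-1)/p) := by
          rw [hq1]
          congr 2
          congr 1; funext x; exact heq x
  -- combine
  have main : I ≤ (ENNReal.ofReal (p/(p-1)) * J ^ (1/p)) * I ^ ((p-1)/p) := by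
    calc I ≤ ENNReal.ofReal p * ∫⁻ t in Ioi 0, ν {x | t ≤ M x} * ENNReal.ofReal (t ^ (p-2)) := L3
      _ = ENNReal.ofReal p * ((ENNReal.ofReal (p-1))⁻¹ * ∫⁻ x, ENNReal.ofReal (M x ^ (p-1)) ∂ν) := by
          rw [L5]
      _ = ENNReal.ofReal (p/(p-1)) * ∫⁻ x, ENNReal.ofReal (M x ^ (p-1)) ∂ν := by
          rw [ENNReal.ofReal_div_of_pos hp1, div_eq_mul_inv, mul_assoc]
      _ = ENNReal.ofReal (p/(p-1)) * ∫⁻ x, ENNReal.ofReal |S N x| * ENNReal.ofReal (M x ^ (p-1)) ∂μ := by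
          rw [L6]
      _ ≤ ENNReal.ofReal (p/(p-1)) * (J ^ (1/p) * I ^ ((p-1)/p)) := mul_le_mul_right holder _
      _ = (ENNReal.ofReal (p/(p-1)) * J ^ (1/p)) * I ^ ((p-1)/p) := by rw [mul_assoc]
  rcases eq_or_ne I 0 with hI0 | hI0
  · rw [hI0, ENNReal.zero_rpow_of_pos (by positivity : (0:ℝ) < 1/p)]
    exact zero_le
  · have hq0 : I ^ ((p-1)/p) ≠ 0 := by
      simp only [ne_eq, ENNReal.rpow_eq_zero_iff, not_or]
      constructor
      · rintro ⟨h, _⟩; exact hI0 h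
      · rintro ⟨h, _⟩; exact hIfin h
    have hqtop : I ^ ((p-1)/p) ≠ ⊤ := by
      refine ENNReal.rpow_ne_top_of_nonneg (by positivity) hIfin
    have hsplit : I = I ^ (1/p) * I ^ ((p-1)/p) := by
      rw [← ENNReal.rpow_add _ _ hI0 hIfin]
      rw [show 1/p + (p-1)/p = 1 by field_simp; ring, ENNReal.rpow_one]
    have main2 : I ^ (1/p) * I ^ ((p-1)/p)
        ≤ (ENNReal.ofReal (p/(p-1)) * J ^ (1/p)) * I ^ ((p-1)/p) := by
      rw [← hsplit]; exact main
    exact (ENNReal.mul_le_mul_iff_left hq0 hqtop).mp main2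

end Doob


/-- Theorem 2 (maximal inequality for martingales over a σ-finite measure). -/
theorem martingale_maximal_BGL
    {X : Type*} {m0 : MeasurableSpace X} (μ : Measure X) [SigmaFinite μ]
    (a : ℝ) (b : ℝ≥0∞) (ha : 1 < a) (hab : ENNReal.ofReal a < b)
    (ψ : ℝ → ℝ) (hψ : IsPsi a b ψ)
    (ℱ : Filtration ℕ m0) (hσfin : ∀ n, SigmaFinite (μ.trim (ℱ.le n)))
    (S : ℕ → X → ℝ) (hmart : Martingale S ℱ μ) (hint : ∀ n, Integrable (S n) μ)
    (hSLp : ∀ n, ∀ p ∈ expSet a b, lpNorm μ (S n) p < ⊤)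
    (γ : ℝ) (hγ : 0 < γ)
    (L : ℕ → ℝ) (hL : ∀ n, 1 ≤ n → 0 < L n)
    (C₂ : ℝ) (hC₂ : ∀ n, 1 ≤ n → L (2 * n) / L n ≤ C₂)
    (hσmono : ∀ m n : ℕ, 1 ≤ m → m ≤ n → (m : ℝ) ^ γ * L m ≤ (n : ℝ) ^ γ * L n)
    (K : ℝ) (hK0 : 0 ≤ K)
    (hK : ∀ n, 1 ≤ n → ∀ p ∈ expSet a b,
      lpNorm μ (S n) p ≤ ENNReal.ofReal (K * ψ p * ((n : ℝ) ^ γ * L n)))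
    (v : ℕ → ℝ) (hv : ∀ n, 1 ≤ n → 0 < v n)
    (hvmono : ∀ m n : ℕ, 1 ≤ m → m ≤ n → v m ≤ v n)
    (hV : Summable fun k : ℕ => 1 / v (2 ^ k)) :
    (⨆ p ∈ expSet a b,
        lpNormNN μ
          (fun x => ⨆ n : ℕ, ⨆ _ : 1 ≤ n,
            ENNReal.ofReal (|S n x| / (v n * ((n : ℝ) ^ γ * L n)))) p /
          ENNReal.ofReal (p * ψ p / (p - 1))) ≤
      ENNReal.ofReal ((2 : ℝ) ^ γ * C₂ * (∑' k : ℕ, 1 / v (2 ^ k)) * K) := by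
  -- general setup (independent of p)
  have hSm : ∀ n, Measurable (S n) := fun n => ((hmart.stronglyAdapted n).mono (ℱ.le n)).measurable
  set σr : ℕ → ℝ := fun n => (n : ℝ) ^ γ * L n with hσr
  have hσpos : ∀ n : ℕ, 1 ≤ n → 0 < σr n := by
    intro n hn
    have : (0:ℝ) < (n:ℝ) := by exact_mod_cast hn
    exact mul_pos (Real.rpow_pos_of_pos this γ) (hL n hn)
  have hC₂pos : 0 < C₂ := by
    have h1 := hC₂ 1 le_rfl
    have h2 : 0 < L (2 * 1) / L 1 := div_pos (hL 2 (by norm_num)) (hL 1 le_rfl)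
    calc (0:ℝ) < L (2 * 1) / L 1 := by exact_mod_cast h2
      _ ≤ C₂ := h1
  have h2pow1 : ∀ k : ℕ, (1:ℕ) ≤ 2 ^ k := fun k => Nat.one_le_two_pow
  have hσdouble : ∀ k : ℕ, σr (2 ^ (k+1)) ≤ (2:ℝ) ^ γ * C₂ * σr (2 ^ k) := by
    intro k
    have h2k : (0:ℝ) < ((2:ℕ) ^ k : ℕ) := by positivity
    have hLd : L (2 * 2 ^ k) ≤ C₂ * L (2 ^ k) := by
      have := hC₂ (2 ^ k) (h2pow1 k)
      rw [div_le_iff₀ (hL (2 ^ k) (h2pow1 k))] at this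
      linarith [this]
    have hcast : ((2 ^ (k+1) : ℕ) : ℝ) ^ γ = (2:ℝ) ^ γ * ((2 ^ k : ℕ) : ℝ) ^ γ := by
      have : ((2 ^ (k+1) : ℕ) : ℝ) = 2 * ((2 ^ k : ℕ) : ℝ) := by push_cast; ring
      rw [this, Real.mul_rpow (by norm_num) h2k.le]
    have h2e : (2 : ℕ) ^ (k+1) = 2 * 2 ^ k := by ring
    calc σr (2 ^ (k+1)) = ((2 ^ (k+1) : ℕ) : ℝ) ^ γ * L (2 * 2 ^ k) := by rw [hσr, h2e]
      _ = (2:ℝ) ^ γ * (((2 ^ k : ℕ) : ℝ) ^ γ * L (2 * 2 ^ k)) := by rw [hcast]; ring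
      _ ≤ (2:ℝ) ^ γ * (((2 ^ k : ℕ) : ℝ) ^ γ * (C₂ * L (2 ^ k))) := by
          have hb : (0:ℝ) ≤ ((2 ^ k : ℕ) : ℝ) ^ γ := by positivity
          have h2γ : (0:ℝ) ≤ (2:ℝ) ^ γ := by positivity
          exact mul_le_mul_of_nonneg_left (mul_le_mul_of_nonneg_left hLd hb) h2γ
      _ = (2:ℝ) ^ γ * C₂ * σr (2 ^ k) := by rw [hσr]; ring
  -- the dominating functions
  set f : ℕ → X → ℝ≥0∞ := fun k x =>
    ENNReal.ofReal (1 / (v (2 ^ k) * σr (2 ^ k))) * ENNReal.ofReal (Mx S (2 ^ (k+1)) x) with hf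
  have hfmeas : ∀ k, Measurable (f k) := fun k =>
    measurable_const.mul (measurable_Mx hSm _).ennreal_ofReal
  -- pointwise domination of the maximal function
  have hpoint : ∀ x : X, (⨆ n : ℕ, ⨆ _ : 1 ≤ n,
      ENNReal.ofReal (|S n x| / (v n * σr n))) ≤ ∑' k, f k x := by
    intro x
    refine iSup₂_le fun n hn => ?_
    set k := Nat.log 2 n with hk
    have hn0 : n ≠ 0 := by omega
    have h2k : 2 ^ k ≤ n := Nat.pow_log_le_self 2 hn0
    have hn2 : n < 2 ^ (k+1) := Nat.lt_pow_succ_log_self one_lt_two n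
    have h1k : (1:ℕ) ≤ 2 ^ k := h2pow1 k
    have hvk : 0 < v (2 ^ k) := hv _ h1k
    have hσk : 0 < σr (2 ^ k) := hσpos _ h1k
    have hdk : 0 < v (2 ^ k) * σr (2 ^ k) := mul_pos hvk hσk
    have hdn : v (2 ^ k) * σr (2 ^ k) ≤ v n * σr n := by
      have h1 := hvmono _ _ h1k h2k
      have h2 : σr (2 ^ k) ≤ σr n := hσmono _ _ h1k h2k
      exact mul_le_mul h1 h2 hσk.le (le_of_lt (lt_of_lt_of_le hvk h1))
    have hMle : |S n x| ≤ Mx S (2 ^ (k+1)) x := abs_le_Mx S (le_of_lt hn2) x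
    have hreal : |S n x| / (v n * σr n)
        ≤ (1 / (v (2 ^ k) * σr (2 ^ k))) * Mx S (2 ^ (k+1)) x := by
      rw [one_div_mul_eq_div]
      exact div_le_div₀ ((abs_nonneg _).trans hMle) hMle hdk hdn
    calc ENNReal.ofReal (|S n x| / (v n * σr n))
        ≤ ENNReal.ofReal ((1 / (v (2 ^ k) * σr (2 ^ k))) * Mx S (2 ^ (k+1)) x) :=
          ENNReal.ofReal_le_ofReal hreal
      _ = f k x := ENNReal.ofReal_mul (by positivity)
      _ ≤ ∑' k, f k x := ENNReal.le_tsum k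
  -- now fix p
  refine iSup₂_le fun p hp => ?_
  have hap : a < p := hp.1
  have hp1 : 1 < p := ha.trans hap
  have hp0 : 0 < p := lt_trans one_pos hp1
  have hpm1 : 0 < p - 1 := by linarith
  have hψp : 1 ≤ ψ p := hψ.one_le p hp
  have hψp0 : 0 < ψ p := lt_of_lt_of_le one_pos hψp
  -- finiteness of p-th moments
  have hfin : ∀ n, ∫⁻ x, ENNReal.ofReal |S n x| ^ p ∂μ < ⊤ := by
    intro n
    have h1 := hSLp n p hp
    rw [_root_.lpNorm] at h1
    have h2 : (∫⁻ x, ENNReal.ofReal (|S n x| ^ p) ∂μ) = ∫⁻ x, ENNReal.ofReal |S n x| ^ p ∂μ := by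
      congr 1; funext x
      exact (ENNReal.ofReal_rpow_of_nonneg (abs_nonneg _) hp0.le).symm
    rw [h2] at h1
    exact (ENNReal.rpow_lt_top_iff_of_pos (by positivity : (0:ℝ) < 1/p)).mp h1
  have hlpeq : ∀ n : ℕ, (∫⁻ x, ENNReal.ofReal |S n x| ^ p ∂μ) ^ (1/p) = lpNorm μ (S n) p := by
    intro n
    rw [_root_.lpNorm]
    congr 1
    congr 1; funext x
    exact ENNReal.ofReal_rpow_of_nonneg (abs_nonneg _) hp0.le
  -- per-block estimate
  have hblock : ∀ k : ℕ, (∫⁻ x, f k x ^ p ∂μ) ^ (1/p)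
      ≤ ENNReal.ofReal ((p * ψ p / (p-1)) * ((2:ℝ) ^ γ * C₂ * K) * (1 / v (2 ^ k))) := by
    intro k
    set N' := 2 ^ (k+1) with hN'
    set c := ENNReal.ofReal (1 / (v (2 ^ k) * σr (2 ^ k))) with hc
    have hscale : (∫⁻ x, f k x ^ p ∂μ) ^ (1/p)
        = c * (∫⁻ x, ENNReal.ofReal (Mx S N' x) ^ p ∂μ) ^ (1/p) := by
      have h1 : ∀ x, f k x ^ p = c ^ p * ENNReal.ofReal (Mx S N' x) ^ p := fun x =>
        ENNReal.mul_rpow_of_nonneg _ _ hp0.le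
      simp only [h1]
      have hmeasM : Measurable fun x => ENNReal.ofReal (Mx S N' x) ^ p :=
        ENNReal.continuous_rpow_const.measurable.comp (measurable_Mx hSm N').ennreal_ofReal
      rw [lintegral_const_mul _ hmeasM,
        ENNReal.mul_rpow_of_nonneg _ _ (by positivity : (0:ℝ) ≤ 1/p),
        ← ENNReal.rpow_mul, mul_one_div_cancel hp0.ne', ENNReal.rpow_one]
    have hdoob : (∫⁻ x, ENNReal.ofReal (Mx S N' x) ^ p ∂μ) ^ (1/p)
        ≤ ENNReal.ofReal (p/(p-1)) * (∫⁻ x, ENNReal.ofReal |S N' x| ^ p ∂μ) ^ (1/p) :=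
      doob_Lp hSm N' (fun ε hε => weak_maximal ℱ hσfin hmart hint N' hε) hp1 hfin
    have hKb : (∫⁻ x, ENNReal.ofReal |S N' x| ^ p ∂μ) ^ (1/p)
        ≤ ENNReal.ofReal (K * ψ p * σr N') := by
      rw [hlpeq N']
      exact hK N' (h2pow1 (k+1)) p hp
    have hreal2 : (1 / (v (2 ^ k) * σr (2 ^ k))) * ((p/(p-1)) * (K * ψ p * σr N'))
        ≤ (p * ψ p / (p-1)) * ((2:ℝ) ^ γ * C₂ * K) * (1 / v (2 ^ k)) := by
      have h1k : (1:ℕ) ≤ 2 ^ k := h2pow1 k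
      have hvk : 0 < v (2 ^ k) := hv _ h1k
      have hσk : 0 < σr (2 ^ k) := hσpos _ h1k
      have hd := hσdouble k
      have step : K * ψ p * σr N' ≤ K * ψ p * ((2:ℝ) ^ γ * C₂ * σr (2 ^ k)) := by
        refine mul_le_mul_of_nonneg_left hd ?_
        positivity
      have step2 : (1 / (v (2 ^ k) * σr (2 ^ k))) * ((p/(p-1)) * (K * ψ p * σr N'))
          ≤ (1 / (v (2 ^ k) * σr (2 ^ k))) * ((p/(p-1)) * (K * ψ p * ((2:ℝ) ^ γ * C₂ * σr (2 ^ k)))) := by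
        refine mul_le_mul_of_nonneg_left (mul_le_mul_of_nonneg_left step ?_) ?_ <;> positivity
      refine step2.trans (le_of_eq ?_)
      field_simp
    calc (∫⁻ x, f k x ^ p ∂μ) ^ (1/p)
        = c * (∫⁻ x, ENNReal.ofReal (Mx S N' x) ^ p ∂μ) ^ (1/p) := hscale
      _ ≤ c * (ENNReal.ofReal (p/(p-1)) * ENNReal.ofReal (K * ψ p * σr N')) := by
          refine mul_le_mul_right (hdoob.trans (mul_le_mul_right hKb _)) _
      _ = ENNReal.ofReal ((1 / (v (2 ^ k) * σr (2 ^ k))) * ((p/(p-1)) * (K * ψ p * σr N'))) := by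
          have hn1 : (0:ℝ) ≤ p/(p-1) := div_nonneg hp0.le hpm1.le
          have h1k : (1:ℕ) ≤ 2 ^ k := h2pow1 k
          have hvk : 0 < v (2 ^ k) := hv _ h1k
          have hσk : 0 < σr (2 ^ k) := hσpos _ h1k
          have hn2 : (0:ℝ) ≤ 1 / (v (2 ^ k) * σr (2 ^ k)) := by positivity
          rw [hc, ← ENNReal.ofReal_mul hn1, ← ENNReal.ofReal_mul hn2]
      _ ≤ ENNReal.ofReal ((p * ψ p / (p-1)) * ((2:ℝ) ^ γ * C₂ * K) * (1 / v (2 ^ k))) :=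
          ENNReal.ofReal_le_ofReal hreal2
  -- sum the blocks
  set cc := (p * ψ p / (p-1)) * ((2:ℝ) ^ γ * C₂ * K) with hcc
  have hccnn : 0 ≤ cc := by positivity
  have hsum : ∑' k, (∫⁻ x, f k x ^ p ∂μ) ^ (1/p)
      ≤ ENNReal.ofReal (cc * ∑' k : ℕ, 1 / v (2 ^ k)) := by
    have h1 : ∑' k, (∫⁻ x, f k x ^ p ∂μ) ^ (1/p) ≤ ∑' k, ENNReal.ofReal (cc * (1 / v (2 ^ k))) :=
      ENNReal.tsum_le_tsum fun k => hblock k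
    have h2 : ∑' k : ℕ, ENNReal.ofReal (cc * (1 / v (2 ^ k)))
        = ENNReal.ofReal (∑' k : ℕ, cc * (1 / v (2 ^ k))) := by
      refine (ENNReal.ofReal_tsum_of_nonneg (fun k => ?_) (hV.mul_left cc)).symm
      have := hv (2 ^ k) (h2pow1 k)
      positivity
    rw [h2, tsum_mul_left] at h1
    exact h1
  -- assemble
  have hmain : lpNormNN μ (fun x => ⨆ n : ℕ, ⨆ _ : 1 ≤ n,
      ENNReal.ofReal (|S n x| / (v n * σr n))) p
      ≤ ENNReal.ofReal (cc * ∑' k : ℕ, 1 / v (2 ^ k)) := by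
    calc lpNormNN μ (fun x => ⨆ n : ℕ, ⨆ _ : 1 ≤ n,
          ENNReal.ofReal (|S n x| / (v n * σr n))) p
        ≤ (∫⁻ x, (∑' k, f k x) ^ p ∂μ) ^ (1/p) := by
          rw [lpNormNN]
          exact ENNReal.rpow_le_rpow (lintegral_mono fun x =>
            ENNReal.rpow_le_rpow (hpoint x) hp0.le) (by positivity)
      _ ≤ ∑' k, (∫⁻ x, f k x ^ p ∂μ) ^ (1/p) := lintegral_Lp_tsum_le hfmeas hp1.le
      _ ≤ ENNReal.ofReal (cc * ∑' k : ℕ, 1 / v (2 ^ k)) := hsum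
  refine ENNReal.div_le_of_le_mul ?_
  refine hmain.trans ?_
  rw [show cc * ∑' k : ℕ, 1 / v (2 ^ k)
      = ((2:ℝ) ^ γ * C₂ * (∑' k : ℕ, 1 / v (2 ^ k)) * K) * (p * ψ p / (p-1)) by rw [hcc]; ring,
    ENNReal.ofReal_mul (by
      have hVnn : (0:ℝ) ≤ ∑' k : ℕ, 1 / v (2 ^ k) :=
        tsum_nonneg fun k => by have := hv (2 ^ k) (h2pow1 k); positivity
      have h2γ : (0:ℝ) ≤ (2:ℝ) ^ γ := by positivity
      exact mul_nonneg (mul_nonneg (mul_nonneg h2γ hC₂pos.le) hVnn) hK0)]
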